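/- Fix n ≥ 1 and t ∈ [0, 1]. For 1 ≤ k ≤ n, let G_k^{(t)} ∈ ℝ^{(n+1)×(n+1)} be the block-diagonal matrix diag(I_{k-1}, G̃) where G̃ ∈ ℝ^{(n+2-k)×(n+2-k)} is lower bidiagonal with G̃_{00} = 1, G̃_{ii} = t for i ≥ 1, and G̃_{i,i-1} = 1 − t for i ≥ 1, all other entries zero. Then the Bernstein matrix satisfies 𝓑_n^{(t)} = G_n^{(t)} G_{n-1}^{(t)} ⋯ G_1^{(t)}. -/

import Mathlib

/-- The `n`-th Bernstein matrix `𝓑_n^{(t)} ∈ ℝ^{(n+1)×(n+1)}`: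
`(𝓑_n^{(t)})_{ij} = C(i, j) t^j (1-t)^{i-j}` for `j ≤ i`, else `0`. -/
def bernsteinMat (n : ℕ) (t : ℝ) : Matrix (Fin (n + 1)) (Fin (n + 1)) ℝ :=
  Matrix.of fun i j =>
    if (j : ℕ) ≤ (i : ℕ) then
      ((i : ℕ).choose (j : ℕ) : ℝ) * t ^ (j : ℕ) * (1 - t) ^ ((i : ℕ) - (j : ℕ))
    else 0

/-- The `(n+1) × (n+1)` block-diagonal matrix `G_k^{(t)} = diag(I_{k-1}, G̃)` where `G̃` is
lower bidiagonal with `G̃_{00} = 1`, `G̃_{ii} = t` and `G̃_{i,i-1} = 1 - t` for `i ≥ 1`.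
Concretely (zero-indexed): rows `i < k` agree with the identity, and rows `i ≥ k` have the
entry `t` in column `i` and the entry `1 - t` in column `i - 1`. -/
def Gmat (n k : ℕ) (t : ℝ) : Matrix (Fin (n + 1)) (Fin (n + 1)) ℝ :=
  Matrix.of fun i j =>
    if (i : ℕ) < k then (if (i : ℕ) = (j : ℕ) then 1 else 0)
    else if (j : ℕ) = (i : ℕ) then t else if (j : ℕ) + 1 = (i : ℕ) then 1 - t else 0

/-- Partial de Casteljau product `Q_k = G_k G_{k-1} ⋯ G_1`, in closed form. -/
def Qmat (n k : ℕ) (t : ℝ) : Matrix (Fin (n + 1)) (Fin (n + 1)) ℝ :=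
  Matrix.of fun i j =>
    if (i : ℕ) - min (i : ℕ) k ≤ (j : ℕ) ∧ (j : ℕ) ≤ (i : ℕ) then
      ((min (i : ℕ) k).choose ((j : ℕ) - ((i : ℕ) - min (i : ℕ) k)) : ℝ) *
        t ^ ((j : ℕ) - ((i : ℕ) - min (i : ℕ) k)) *
        (1 - t) ^ (min (i : ℕ) k - ((j : ℕ) - ((i : ℕ) - min (i : ℕ) k)))
    else 0

lemma Qmat_zero (n : ℕ) (t : ℝ) : Qmat n 0 t = 1 := by
  ext i j
  simp only [Qmat, Matrix.of_apply, Matrix.one_apply, Nat.min_zero, Nat.sub_zero]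
  by_cases h : i = j
  · subst h
    simp
  · have h' : (i : ℕ) ≠ (j : ℕ) := fun hc => h (Fin.ext hc)
    rw [if_neg h, if_neg (by omega)]

lemma Qmat_top (n : ℕ) (t : ℝ) : bernsteinMat n t = Qmat n n t := by
  ext i j
  have hi : min (i : ℕ) n = (i : ℕ) := min_eq_left (by omega)
  simp only [bernsteinMat, Qmat, Matrix.of_apply, hi, Nat.sub_self, Nat.sub_zero, Nat.zero_le,
    true_and]

lemma Gmat_mul_Qmat (n k : ℕ) (t : ℝ) :
    Gmat n (k + 1) t * Qmat n k t = Qmat n (k + 1) t := by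
  ext i j
  rw [Matrix.mul_apply]
  by_cases hik : (i : ℕ) < k + 1
  · -- identity row
    rw [Finset.sum_eq_single i]
    · have hG : Gmat n (k + 1) t i i = 1 := by simp only [Gmat, Matrix.of_apply, if_pos hik]; simp
      rw [hG, one_mul]
      have h1 : min (i : ℕ) k = (i : ℕ) := min_eq_left (by omega)
      have h2 : min (i : ℕ) (k + 1) = (i : ℕ) := min_eq_left (by omega)
      simp only [Qmat, Matrix.of_apply, h1, h2]
    · intro b _ hb
      have hb' : (i : ℕ) ≠ (b : ℕ) := fun hc => hb (Fin.ext hc.symm)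
      have hG : Gmat n (k + 1) t i b = 0 := by
        simp only [Gmat, Matrix.of_apply, if_pos hik, if_neg hb']
      rw [hG, zero_mul]
    · intro h; exact absurd (Finset.mem_univ i) h
  · -- row i ≥ k+1 : two nonzero entries
    push_neg at hik
    have hi1 : 1 ≤ (i : ℕ) := by omega
    set i' : Fin (n + 1) := ⟨(i : ℕ) - 1, by omega⟩ with hi'
    have hne : i ≠ i' := by
      intro hc
      have := congrArg (Fin.val) hc
      simp [hi'] at this
      omega
    rw [Finset.sum_eq_add_of_mem i i' (Finset.mem_univ _) (Finset.mem_univ _) hne ?_]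
    · have hGi : Gmat n (k + 1) t i i = t := by
        simp only [Gmat, Matrix.of_apply, if_neg (by omega : ¬ (i : ℕ) < k + 1)]
        simp
      have hGi' : Gmat n (k + 1) t i i' = 1 - t := by
        simp only [Gmat, Matrix.of_apply, hi']
        rw [if_neg (by omega : ¬ (i : ℕ) < k + 1), if_neg (by omega : ¬ (i : ℕ) - 1 = (i : ℕ)),
          if_pos (by omega : (i : ℕ) - 1 + 1 = (i : ℕ))]
      rw [hGi, hGi']
      -- now the entrywise identity
      simp only [Qmat, Matrix.of_apply, hi']
      have hm1 : min (i : ℕ) k = k := min_eq_right (by omega)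
      have hm2 : min (i : ℕ) (k + 1) = k + 1 := min_eq_right (by omega)
      have hm3 : min ((i : ℕ) - 1) k = k := min_eq_right (by omega)
      rw [hm1, hm2, hm3]
      set iv := (i : ℕ)
      set jv := (j : ℕ)
      by_cases hc : iv - (k + 1) ≤ jv ∧ jv ≤ iv
      · rw [if_pos hc]
        obtain ⟨hc1, hc2⟩ := hc
        by_cases hA : iv - k ≤ jv ∧ jv ≤ iv
        · by_cases hB : jv ≤ iv - 1
          · -- Pascal case
            rw [if_pos hA, if_pos ⟨by omega, hB⟩]
            obtain ⟨e', he'⟩ : ∃ e', jv - (iv - (k + 1)) = e' + 1 := ⟨jv - (iv - k), by omega⟩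
            rw [he']
            have h1 : jv - (iv - k) = e' := by omega
            have h2 : jv - (iv - 1 - k) = e' + 1 := by omega
            have he'k : e' + 1 ≤ k := by omega
            rw [h1, h2, Nat.choose_succ_succ]
            have h4 : k + 1 - (e' + 1) = k - e' := by omega
            rw [h4]
            have h3 : k - e' = (k - (e' + 1)) + 1 := by omega
            rw [h3, pow_succ]
            push_cast
            ring
          · -- jv = iv
            have hjv : jv = iv := by omega
            rw [if_pos hA, if_neg (by omega)]
            have h1 : jv - (iv - k) = k := by omega
            have h2 : jv - (iv - (k + 1)) = k + 1 := by omega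
            rw [h1, h2, Nat.choose_self, Nat.choose_self, Nat.sub_self, Nat.sub_self, pow_succ]
            push_cast
            ring
        · -- jv = iv - (k+1)
          have hjv : jv = iv - (k + 1) := by omega
          rw [if_neg hA, if_pos ⟨by omega, by omega⟩]
          have h1 : jv - (iv - 1 - k) = 0 := by omega
          have h2 : jv - (iv - (k + 1)) = 0 := by omega
          rw [h1, h2, Nat.choose_zero_right, Nat.choose_zero_right, Nat.sub_zero, Nat.sub_zero,
            pow_succ]
          push_cast
          ring
      · rw [if_neg hc, if_neg (by omega), if_neg (by omega)]
        ring
    · intro b _ hb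
      obtain ⟨hbne, hb'⟩ := hb
      have h1 : ¬ (b : ℕ) = (i : ℕ) := fun hc => hbne (Fin.ext hc)
      have h2 : ¬ (b : ℕ) + 1 = (i : ℕ) := by
        intro hc
        apply hb'
        apply Fin.ext
        simp [hi']
        omega
      have hG : Gmat n (k + 1) t i b = 0 := by
        simp only [Gmat, Matrix.of_apply, if_neg (by omega : ¬ (i : ℕ) < k + 1), if_neg h1,
          if_neg h2]
      rw [hG, zero_mul]

lemma Qmat_prod (n k : ℕ) (t : ℝ) :
    (((List.range k).map fun ℓ => Gmat n (k - ℓ) t)).prod = Qmat n k t := by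
  induction k with
  | zero => simp [Qmat_zero]
  | succ k ih =>
    rw [List.range_succ_eq_map]
    simp only [List.map_cons, List.map_map, List.prod_cons, Nat.sub_zero]
    have hmap : (List.range k).map ((fun ℓ => Gmat n (k + 1 - ℓ) t) ∘ (· + 1)) =
        (List.range k).map (fun ℓ => Gmat n (k - ℓ) t) := by
      apply List.map_congr_left
      intro a _
      simp only [Function.comp, Nat.succ_sub_succ_eq_sub]
    rw [hmap, ih, Gmat_mul_Qmat]

/-- De Casteljau factorization: `𝓑_n^{(t)} = G_n^{(t)} G_{n-1}^{(t)} ⋯ G_1^{(t)}`. -/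
theorem bernstein_G_factorization (n : ℕ) (hn : 1 ≤ n) (t : ℝ) (ht0 : 0 ≤ t) (ht1 : t ≤ 1) :
    bernsteinMat n t = (((List.range n).map fun ℓ => Gmat n (n - ℓ) t)).prod := by
  rw [Qmat_prod, Qmat_top]
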